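/- Let V, W be real symmetric n×n matrices with V positive definite. Then the matrix G = [[V + WV⁻¹W, WV⁻¹], [V⁻¹W, V⁻¹]] is symmetric, positive definite, and symplectic. -/

import Mathlib

open Matrix

private lemma posDef_conj_aux {m : Type*} [Fintype m] [DecidableEq m]
    {A P : Matrix m m ℝ} (hA : A.PosDef) (hP : IsUnit P) :
    (Pᵀ * A * P).PosDef := by
  refine posDef_iff_dotProduct_mulVec.mpr ⟨?_, ?_⟩
  · have hAT : Aᵀ = A := by
      rw [← conjTranspose_eq_transpose_of_trivial, hA.isHermitian.eq]
    simp only [Matrix.IsHermitian, conjTranspose_mul, hA.isHermitian.eq,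
      conjTranspose_eq_transpose_of_trivial, transpose_transpose, transpose_mul, hAT,
      Matrix.mul_assoc]
  · intro x hx
    have hPx : P *ᵥ x ≠ 0 := by
      intro h
      apply hx
      have : P⁻¹ *ᵥ (P *ᵥ x) = x := by
        rw [mulVec_mulVec, nonsing_inv_mul P ((isUnit_iff_isUnit_det P).mp hP), one_mulVec]
      rw [h, mulVec_zero] at this
      exact this.symm
    have := hA.dotProduct_mulVec_pos hPx
    simpa [star_trivial, Matrix.mul_assoc, ← mulVec_mulVec, dotProduct_mulVec,
      vecMul_transpose] using this

private lemma posDef_fromBlocks_diag {m k : Type*} [Fintype m] [Fintype k]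
    [DecidableEq m] [DecidableEq k] {A : Matrix m m ℝ} {D : Matrix k k ℝ}
    (hA : A.PosDef) (hD : D.PosDef) :
    (fromBlocks A 0 0 D).PosDef := by
  refine posDef_iff_dotProduct_mulVec.mpr ⟨?_, ?_⟩
  · have hAH : Aᴴ = A := hA.isHermitian
    have hDH : Dᴴ = D := hD.isHermitian
    show (fromBlocks A 0 0 D)ᴴ = fromBlocks A 0 0 D
    rw [fromBlocks_conjTranspose, hAH, hDH]
    simp
  · intro x hx
    have hsplit : (star x) ⬝ᵥ (fromBlocks A 0 0 D *ᵥ x) =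
        (star (x ∘ Sum.inl)) ⬝ᵥ (A *ᵥ (x ∘ Sum.inl)) +
        (star (x ∘ Sum.inr)) ⬝ᵥ (D *ᵥ (x ∘ Sum.inr)) := by
      rw [← Sum.elim_comp_inl_inr x]
      simp [fromBlocks_mulVec, dotProduct_block]
    rw [hsplit]
    have horz : x ∘ Sum.inl ≠ 0 ∨ x ∘ Sum.inr ≠ 0 := by
      by_contra h
      push_neg at h
      apply hx
      rw [← Sum.elim_comp_inl_inr x, h.1, h.2]
      ext (i | i) <;> simp
    rcases horz with h | h
    · exact add_pos_of_pos_of_nonneg (hA.dotProduct_mulVec_pos h) (hD.posSemidef.dotProduct_mulVec_nonneg _)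
    · exact add_pos_of_nonneg_of_pos (hA.posSemidef.dotProduct_mulVec_nonneg _) (hD.dotProduct_mulVec_pos h)

/-- for `V, W` real symmetric with `V > 0`, the matrix
`G = [[V + WV⁻¹W, WV⁻¹], [V⁻¹W, V⁻¹]]` is symmetric, positive definite and
symplectic. -/
theorem G_symmetric_posDef_symplectic (n : ℕ) (V W : Matrix (Fin n) (Fin n) ℝ)
    (hV : V.PosDef) (hVs : Vᵀ = V) (hWs : Wᵀ = W) :
    (fromBlocks (V + W * V⁻¹ * W) (W * V⁻¹) (V⁻¹ * W) V⁻¹)ᵀ =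
        fromBlocks (V + W * V⁻¹ * W) (W * V⁻¹) (V⁻¹ * W) V⁻¹ ∧
      (fromBlocks (V + W * V⁻¹ * W) (W * V⁻¹) (V⁻¹ * W) V⁻¹).PosDef ∧
      (fromBlocks (V + W * V⁻¹ * W) (W * V⁻¹) (V⁻¹ * W) V⁻¹)ᵀ *
          fromBlocks (0 : Matrix (Fin n) (Fin n) ℝ) 1 (-1) 0 *
          fromBlocks (V + W * V⁻¹ * W) (W * V⁻¹) (V⁻¹ * W) V⁻¹ =
        fromBlocks (0 : Matrix (Fin n) (Fin n) ℝ) 1 (-1) 0 := by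
  have hdet : IsUnit V.det := (isUnit_iff_isUnit_det V).mp hV.isUnit
  have h1 : V * V⁻¹ = 1 := mul_nonsing_inv V hdet
  have h2 : V⁻¹ * V = 1 := nonsing_inv_mul V hdet
  have hc1 : ∀ X : Matrix (Fin n) (Fin n) ℝ, V * (V⁻¹ * X) = X := by
    intro X; rw [← Matrix.mul_assoc, h1, Matrix.one_mul]
  have hc2 : ∀ X : Matrix (Fin n) (Fin n) ℝ, V⁻¹ * (V * X) = X := by
    intro X; rw [← Matrix.mul_assoc, h2, Matrix.one_mul]
  have hsymm : (fromBlocks (V + W * V⁻¹ * W) (W * V⁻¹) (V⁻¹ * W) V⁻¹)ᵀ =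
      fromBlocks (V + W * V⁻¹ * W) (W * V⁻¹) (V⁻¹ * W) V⁻¹ := by
    simp [fromBlocks_transpose, transpose_add, transpose_mul, transpose_nonsing_inv,
      hVs, hWs, Matrix.mul_assoc]
  refine ⟨hsymm, ?_, ?_⟩
  · have hdecomp : fromBlocks (V + W * V⁻¹ * W) (W * V⁻¹) (V⁻¹ * W) V⁻¹ =
        (fromBlocks (1 : Matrix (Fin n) (Fin n) ℝ) 0 W 1)ᵀ *
          fromBlocks V 0 0 V⁻¹ * fromBlocks 1 0 W 1 := by
      simp [fromBlocks_transpose, fromBlocks_multiply, hWs, Matrix.mul_assoc]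
    rw [hdecomp]
    refine posDef_conj_aux (posDef_fromBlocks_diag hV hV.inv) ?_
    rw [isUnit_iff_isUnit_det, det_fromBlocks_zero₁₂]
    simp
  · rw [hsymm, fromBlocks_multiply, fromBlocks_multiply]
    congr 1 <;>
      simp [Matrix.mul_add, Matrix.add_mul, Matrix.mul_assoc, hc1, hc2, h1, h2] <;>
      abel
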